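/- arXiv:1011.3956 — 2 statements merged into one kernel-verified Lean document; each statement's English description precedes it below -/
import Mathlib

section
/- There is a constant C > 0 such that for all τ ∈ ℝ, all ξ ∈ ℝ with ξ ≠ 0, all integers k₁, k₂ ≥ 0, and every K > 0, the two-dimensional Lebesgue measure of the set E_K = {(τ₁,ξ₁) ∈ ℝ² : |τ₁ − ξ₁⁵| ≤ 2^{k₁}, |(τ−τ₁) − (ξ−ξ₁)⁵| ≤ 2^{k₂}, |2ξ₁ − ξ| ≥ K} is at most C K^{−3} 2^{k₁+k₂} |ξ|^{−1}; moreover the measure of the set E₀ = {(τ₁,ξ₁) ∈ ℝ² : |τ₁ − ξ₁⁵| ≤ 2^{k₁}, |(τ−τ₁) − (ξ−ξ₁)⁵| ≤ 2^{k₂}} is at most C 2^{k₁+k₂} |ξ|^{−3/2}. -/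
open MeasureTheory Set ENNReal

noncomputable def Gfun (ξ t : ℝ) : ℝ := t ^ 5 + (ξ - t) ^ 5

noncomputable def Gd (ξ t : ℝ) : ℝ := 5 * t ^ 4 - 5 * (ξ - t) ^ 4

lemma hasDerivAt_G (ξ t : ℝ) : HasDerivAt (Gfun ξ) (Gd ξ t) t := by
  have h1 : HasDerivAt (fun t : ℝ => t ^ 5) ((5 : ℕ) * t ^ 4) t := by
    simpa using hasDerivAt_pow 5 t
  have h2 : HasDerivAt (fun t : ℝ => ξ - t) (-1) t := by
    simpa using (hasDerivAt_id t).const_sub ξ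
  have h3 : HasDerivAt (fun t : ℝ => (ξ - t) ^ 5) ((5 : ℕ) * (ξ - t) ^ 4 * (-1)) t := by
    simpa using h2.fun_pow 5
  have := h1.fun_add h3
  unfold Gfun Gd
  refine this.congr_deriv ?_
  push_cast
  ring

lemma deriv_G (ξ t : ℝ) : deriv (Gfun ξ) t = Gd ξ t := (hasDerivAt_G ξ t).deriv

lemma Gd_eq (ξ t : ℝ) : Gd ξ t = (5/2) * ξ * (2*t - ξ) * ((2*t - ξ)^2 + ξ^2) := by
  unfold Gd; ring

lemma diffG (ξ : ℝ) : Differentiable ℝ (Gfun ξ) := fun t => (hasDerivAt_G ξ t).differentiableAt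

lemma piece (τ ξ L M : ℝ) (hM : 0 < M) (A : Set ℝ) (hA : Convex ℝ A)
    (hd : (∀ t ∈ A, M ≤ Gd ξ t) ∨ (∀ t ∈ A, Gd ξ t ≤ -M)) :
    volume {t | t ∈ A ∧ |τ - Gfun ξ t| ≤ L} ≤ ENNReal.ofReal (4 * L / M) := by
  have hcont : ContinuousOn (Gfun ξ) A := (diffG ξ).continuous.continuousOn
  have hdiff : DifferentiableOn ℝ (Gfun ξ) (interior A) := (diffG ξ).differentiableOn
  have key : ∀ x ∈ A, ∀ y ∈ A, x ≤ y → M * (y - x) ≤ |Gfun ξ y - Gfun ξ x| := by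
    rcases hd with hd | hd
    · intro x hx y hy hxy
      have h := hA.mul_sub_le_image_sub_of_le_deriv hcont hdiff
        (fun t ht => by rw [deriv_G]; exact hd t (interior_subset ht)) x hx y hy hxy
      exact h.trans (le_abs_self _)
    · intro x hx y hy hxy
      have h := hA.image_sub_le_mul_sub_of_deriv_le hcont hdiff
        (fun t ht => by rw [deriv_G]; exact hd t (interior_subset ht)) x hx y hy hxy
      have h2 : M * (y - x) ≤ Gfun ξ x - Gfun ξ y := by nlinarith
      calc M * (y - x) ≤ Gfun ξ x - Gfun ξ y := h2
        _ ≤ |Gfun ξ x - Gfun ξ y| := le_abs_self _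
        _ = |Gfun ξ y - Gfun ξ x| := abs_sub_comm _ _
  set s := {t | t ∈ A ∧ |τ - Gfun ξ t| ≤ L} with hs
  rcases s.eq_empty_or_nonempty with h | ⟨x₀, hx₀⟩
  · simp [h]
  · have hsub : s ⊆ Icc (x₀ - 2*L/M) (x₀ + 2*L/M) := by
      intro y hy
      have h2 : |Gfun ξ y - Gfun ξ x₀| ≤ 2*L := by
        have e : Gfun ξ y - Gfun ξ x₀ = (τ - Gfun ξ x₀) - (τ - Gfun ξ y) := by ring
        rw [e]
        calc |(τ - Gfun ξ x₀) - (τ - Gfun ξ y)| ≤ |τ - Gfun ξ x₀| + |τ - Gfun ξ y| :=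
          abs_sub _ _
          _ ≤ 2*L := by linarith [hx₀.2, hy.2]
      have h1 : M * |y - x₀| ≤ 2*L := by
        rcases le_total x₀ y with hc | hc
        · have := key x₀ hx₀.1 y hy.1 hc
          rw [abs_of_nonneg (by linarith)]
          linarith
        · have hk := key y hy.1 x₀ hx₀.1 hc
          rw [abs_of_nonpos (by linarith)]
          rw [abs_sub_comm] at h2
          linarith
      have h3 : |y - x₀| ≤ 2*L/M := by
        rw [le_div_iff₀ hM]; nlinarith [abs_nonneg (y - x₀)]
      have := abs_le.mp h3
      constructor <;> [linarith [this.1]; linarith [this.2]]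
    calc volume s ≤ volume (Icc (x₀ - 2*L/M) (x₀ + 2*L/M)) := measure_mono hsub
      _ = ENNReal.ofReal (x₀ + 2*L/M - (x₀ - 2*L/M)) := Real.volume_Icc
      _ = ENNReal.ofReal (4 * L / M) := by
          congr 1; field_simp; ring

lemma fubini_bound (τ ξ : ℝ) (k₁ k₂ : ℕ) (B : Set ℝ) (hB : MeasurableSet B) :
    volume {p : ℝ × ℝ | |p.1 - p.2 ^ 5| ≤ (2:ℝ) ^ k₁ ∧
        |(τ - p.1) - (ξ - p.2) ^ 5| ≤ (2:ℝ) ^ k₂ ∧ p.2 ∈ B}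
      ≤ ENNReal.ofReal (2 * 2 ^ min k₁ k₂) *
        volume {t | t ∈ B ∧ |τ - Gfun ξ t| ≤ (2:ℝ) ^ k₁ + 2 ^ k₂} := by
  set s := {p : ℝ × ℝ | |p.1 - p.2 ^ 5| ≤ (2:ℝ) ^ k₁ ∧
      |(τ - p.1) - (ξ - p.2) ^ 5| ≤ (2:ℝ) ^ k₂ ∧ p.2 ∈ B} with hs_def
  have hmeas : MeasurableSet s := by
    have h1 : MeasurableSet {p : ℝ × ℝ | |p.1 - p.2 ^ 5| ≤ (2:ℝ) ^ k₁} :=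
      (isClosed_le (by fun_prop) continuous_const).measurableSet
    have h2 : MeasurableSet {p : ℝ × ℝ | |(τ - p.1) - (ξ - p.2) ^ 5| ≤ (2:ℝ) ^ k₂} :=
      (isClosed_le (by fun_prop) continuous_const).measurableSet
    have h3 : MeasurableSet {p : ℝ × ℝ | p.2 ∈ B} := measurable_snd hB
    exact (h1.inter (h2.inter h3))
  have hS'meas : MeasurableSet {t | t ∈ B ∧ |τ - Gfun ξ t| ≤ (2:ℝ) ^ k₁ + 2 ^ k₂} := by
    have h4 : MeasurableSet {t : ℝ | |τ - Gfun ξ t| ≤ (2:ℝ) ^ k₁ + 2 ^ k₂} :=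
      (isClosed_le (by unfold Gfun; fun_prop) continuous_const).measurableSet
    exact hB.inter h4
  rw [show (volume : Measure (ℝ × ℝ)) = (volume : Measure ℝ).prod volume from
    Measure.volume_eq_prod ℝ ℝ, Measure.prod_apply_symm hmeas]
  set S' := {t | t ∈ B ∧ |τ - Gfun ξ t| ≤ (2:ℝ) ^ k₁ + 2 ^ k₂} with hS'
  calc ∫⁻ y, volume ((fun x => (x, y)) ⁻¹' s) ∂volume
      ≤ ∫⁻ y, S'.indicator (fun _ => ENNReal.ofReal (2 * 2 ^ min k₁ k₂)) y ∂volume := by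
        apply lintegral_mono
        intro y
        by_cases hy : y ∈ S'
        · rw [Set.indicator_of_mem hy]
          rcases le_total k₁ k₂ with hk | hk
          · have : (fun x => (x, y)) ⁻¹' s ⊆ Icc (y ^ 5 - 2 ^ k₁) (y ^ 5 + 2 ^ k₁) := by
              intro x hx
              have := abs_le.mp hx.1
              constructor <;> linarith [this.1, this.2]
            calc volume ((fun x => (x, y)) ⁻¹' s) ≤ volume (Icc (y ^ 5 - 2 ^ k₁) (y ^ 5 + 2 ^ k₁)) :=
                measure_mono this
              _ = ENNReal.ofReal (y ^ 5 + 2 ^ k₁ - (y ^ 5 - 2 ^ k₁)) := Real.volume_Icc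
              _ ≤ ENNReal.ofReal (2 * 2 ^ min k₁ k₂) := by
                  apply ENNReal.ofReal_le_ofReal
                  rw [min_eq_left hk]; linarith
          · have : (fun x => (x, y)) ⁻¹' s ⊆
                Icc (τ - (ξ - y) ^ 5 - 2 ^ k₂) (τ - (ξ - y) ^ 5 + 2 ^ k₂) := by
              intro x hx
              have := abs_le.mp hx.2.1
              constructor <;> linarith [this.1, this.2]
            calc volume ((fun x => (x, y)) ⁻¹' s)
                ≤ volume (Icc (τ - (ξ - y) ^ 5 - 2 ^ k₂) (τ - (ξ - y) ^ 5 + 2 ^ k₂)) :=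
                measure_mono this
              _ = ENNReal.ofReal (τ - (ξ - y) ^ 5 + 2 ^ k₂ - (τ - (ξ - y) ^ 5 - 2 ^ k₂)) :=
                Real.volume_Icc
              _ ≤ ENNReal.ofReal (2 * 2 ^ min k₁ k₂) := by
                  apply ENNReal.ofReal_le_ofReal
                  rw [min_eq_right hk]; linarith
        · rw [Set.indicator_of_notMem hy]
          have : (fun x => (x, y)) ⁻¹' s = ∅ := by
            ext x
            simp only [Set.mem_preimage, Set.mem_empty_iff_false, iff_false]
            intro hx
            apply hy
            refine ⟨hx.2.2, ?_⟩
            have e : τ - Gfun ξ y = (x - y ^ 5) + ((τ - x) - (ξ - y) ^ 5) := by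
              unfold Gfun; ring
            rw [e]
            calc |(x - y ^ 5) + ((τ - x) - (ξ - y) ^ 5)|
                ≤ |x - y ^ 5| + |(τ - x) - (ξ - y) ^ 5| := abs_add_le _ _
              _ ≤ (2:ℝ) ^ k₁ + 2 ^ k₂ := add_le_add hx.1 hx.2.1
          show volume ((fun x => (x, y)) ⁻¹' s) ≤ 0
          rw [this]; simp
    _ = ENNReal.ofReal (2 * 2 ^ min k₁ k₂) * volume S' := by
        rw [lintegral_indicator hS'meas]
        simp [lintegral_const, Measure.restrict_apply MeasurableSet.univ]

lemma bnd1 (ξ u K : ℝ) (hK : 0 < K) (hpos : 0 < ξ) (hu : K ≤ u) :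
    5/2 * ξ * K^3 ≤ 5/2 * ξ * u * (u^2 + ξ^2) := by
  nlinarith [mul_le_mul_of_nonneg_left (pow_le_pow_left₀ hK.le hu 3) (by positivity : (0:ℝ) ≤ 5/2 * ξ),
    mul_nonneg (mul_nonneg hpos.le (hK.le.trans hu)) (sq_nonneg ξ)]

lemma bnd2 (ξ u K : ℝ) (hK : 0 < K) (hpos : 0 < ξ) (hu : K ≤ u) :
    5/2 * (ξ^3 * K) ≤ 5/2 * ξ * u * (u^2 + ξ^2) := by
  nlinarith [mul_le_mul_of_nonneg_left hu (by positivity : (0:ℝ) ≤ ξ^3),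
    mul_nonneg hpos.le (pow_nonneg (hK.le.trans hu) 3)]

set_option maxHeartbeats 1000000 in
theorem stmt2 :
    ∃ C : ℝ, 0 < C ∧ ∀ (τ ξ : ℝ), ξ ≠ 0 → ∀ (k₁ k₂ : ℕ) (K : ℝ), 0 < K →
      volume {p : ℝ × ℝ | |p.1 - p.2 ^ 5| ≤ (2:ℝ) ^ k₁ ∧
          |(τ - p.1) - (ξ - p.2) ^ 5| ≤ (2:ℝ) ^ k₂ ∧ K ≤ |2 * p.2 - ξ|}
        ≤ ENNReal.ofReal (C * K ^ (-(3:ℝ)) * 2 ^ (k₁ + k₂) * |ξ|⁻¹) ∧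
      volume {p : ℝ × ℝ | |p.1 - p.2 ^ 5| ≤ (2:ℝ) ^ k₁ ∧
          |(τ - p.1) - (ξ - p.2) ^ 5| ≤ (2:ℝ) ^ k₂}
        ≤ ENNReal.ofReal (C * 2 ^ (k₁ + k₂) * |ξ| ^ (-(3:ℝ)/2)) := by
  refine ⟨100, by norm_num, ?_⟩
  intro τ ξ hξ k₁ k₂ K hK
  have hξa : (0:ℝ) < |ξ| := abs_pos.mpr hξ
  set m := min k₁ k₂ with hm
  set L : ℝ := 2 ^ k₁ + 2 ^ k₂ with hL
  have hLpos : (0:ℝ) < L := by positivity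
  have ha : (0:ℝ) < 2 ^ m := by positivity
  have hb : (0:ℝ) < 2 ^ (k₁ + k₂) := by positivity
  have hab : (2:ℝ) ^ m ≤ 2 ^ (k₁ + k₂) := pow_le_pow_right₀ one_le_two (by omega)
  have hfact : (2:ℝ) ^ m * L ≤ 2 * 2 ^ (k₁ + k₂) := by
    have h1 : (2:ℝ) ^ m * 2 ^ k₁ ≤ 2 ^ (k₁ + k₂) := by
      rw [← pow_add]; exact pow_le_pow_right₀ one_le_two (by omega)
    have h2 : (2:ℝ) ^ m * 2 ^ k₂ ≤ 2 ^ (k₁ + k₂) := by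
      rw [← pow_add]; exact pow_le_pow_right₀ one_le_two (by omega)
    calc (2:ℝ) ^ m * L = 2 ^ m * 2 ^ k₁ + 2 ^ m * 2 ^ k₂ := by rw [hL]; ring
      _ ≤ 2 ^ (k₁ + k₂) + 2 ^ (k₁ + k₂) := add_le_add h1 h2
      _ = 2 * 2 ^ (k₁ + k₂) := by ring
  constructor
  · -- Part 1
    set M : ℝ := (5/2) * |ξ| * K ^ 3 with hMdef
    have hM : (0:ℝ) < M := by positivity
    set B : Set ℝ := {t | K ≤ |2 * t - ξ|} with hB
    have hBmeas : MeasurableSet B :=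
      (isClosed_le continuous_const (by fun_prop)).measurableSet
    have hset : {p : ℝ × ℝ | |p.1 - p.2 ^ 5| ≤ (2:ℝ) ^ k₁ ∧
        |(τ - p.1) - (ξ - p.2) ^ 5| ≤ (2:ℝ) ^ k₂ ∧ K ≤ |2 * p.2 - ξ|} =
        {p : ℝ × ℝ | |p.1 - p.2 ^ 5| ≤ (2:ℝ) ^ k₁ ∧
        |(τ - p.1) - (ξ - p.2) ^ 5| ≤ (2:ℝ) ^ k₂ ∧ p.2 ∈ B} := rfl
    rw [hset]
    have step1 := fubini_bound τ ξ k₁ k₂ B hBmeas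
    have hP₁ : volume {t | t ∈ Ici ((ξ + K)/2) ∧ |τ - Gfun ξ t| ≤ L}
        ≤ ENNReal.ofReal (4 * L / M) := by
      apply piece τ ξ L M hM _ (convex_Ici _)
      rcases hξ.lt_or_gt with hneg | hpos
      · right
        intro t ht
        rw [Gd_eq, hMdef, abs_of_neg hneg]
        have hu : K ≤ 2 * t - ξ := by have := mem_Ici.mp ht; linarith
        nlinarith [bnd1 (-ξ) (2*t-ξ) K hK (by linarith) hu]
      · left
        intro t ht
        rw [Gd_eq, hMdef, abs_of_pos hpos]
        have hu : K ≤ 2 * t - ξ := by have := mem_Ici.mp ht; linarith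
        nlinarith [bnd1 ξ (2*t-ξ) K hK hpos hu]
    have hP₂ : volume {t | t ∈ Iic ((ξ - K)/2) ∧ |τ - Gfun ξ t| ≤ L}
        ≤ ENNReal.ofReal (4 * L / M) := by
      apply piece τ ξ L M hM _ (convex_Iic _)
      rcases hξ.lt_or_gt with hneg | hpos
      · left
        intro t ht
        rw [Gd_eq, hMdef, abs_of_neg hneg]
        have hu : 2 * t - ξ ≤ -K := by have := mem_Iic.mp ht; linarith
        nlinarith [bnd1 (-ξ) (-(2*t-ξ)) K hK (by linarith) (by linarith)]
      · right
        intro t ht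
        rw [Gd_eq, hMdef, abs_of_pos hpos]
        have hu : 2 * t - ξ ≤ -K := by have := mem_Iic.mp ht; linarith
        nlinarith [bnd1 ξ (-(2*t-ξ)) K hK hpos (by linarith)]
    have hcover : {t | t ∈ B ∧ |τ - Gfun ξ t| ≤ (2:ℝ)^k₁ + 2^k₂} ⊆
        {t | t ∈ Ici ((ξ + K)/2) ∧ |τ - Gfun ξ t| ≤ L} ∪
        {t | t ∈ Iic ((ξ - K)/2) ∧ |τ - Gfun ξ t| ≤ L} := by
      intro t ht
      have h1 : K ≤ |2 * t - ξ| := by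
        have h2 := ht.1
        simp only [hB, mem_setOf_eq] at h2
        exact h2
      rcases le_abs.mp h1 with h | h
      · left; exact ⟨mem_Ici.mpr (by linarith), ht.2⟩
      · right; exact ⟨mem_Iic.mpr (by linarith), ht.2⟩
    have hS' : volume {t | t ∈ B ∧ |τ - Gfun ξ t| ≤ (2:ℝ)^k₁ + 2^k₂}
        ≤ ENNReal.ofReal (8 * L / M) := by
      calc volume {t | t ∈ B ∧ |τ - Gfun ξ t| ≤ (2:ℝ)^k₁ + 2^k₂}
          ≤ volume ({t | t ∈ Ici ((ξ + K)/2) ∧ |τ - Gfun ξ t| ≤ L} ∪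
            {t | t ∈ Iic ((ξ - K)/2) ∧ |τ - Gfun ξ t| ≤ L}) := measure_mono hcover
        _ ≤ _ + _ := measure_union_le _ _
        _ ≤ ENNReal.ofReal (4 * L / M) + ENNReal.ofReal (4 * L / M) := add_le_add hP₁ hP₂
        _ = ENNReal.ofReal (8 * L / M) := by
            rw [← ENNReal.ofReal_add (by positivity) (by positivity)]; ring_nf
    have hKpow : K ^ (-(3:ℝ)) = (K ^ 3)⁻¹ := by
      rw [Real.rpow_neg hK.le, show ((3:ℝ)) = ((3:ℕ):ℝ) by norm_num, Real.rpow_natCast]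
    have hineq : 2 * (2:ℝ)^m * (8 * L / M) ≤ 100 * K ^ (-(3:ℝ)) * 2^(k₁+k₂) * |ξ|⁻¹ := by
      rw [hKpow, hMdef]
      rw [show (2:ℝ) * 2^m * (8 * L / ((5/2) * |ξ| * K^3)) =
            (16 * (2^m * L)) / ((5/2) * |ξ| * K^3) by ring,
        show (100:ℝ) * (K^3)⁻¹ * 2^(k₁+k₂) * |ξ|⁻¹ = (100 * 2^(k₁+k₂)) / (K^3 * |ξ|) by
          field_simp]
      rw [div_le_div_iff₀ (by positivity) (by positivity)]
      nlinarith [mul_le_mul_of_nonneg_right hfact (le_of_lt (mul_pos (pow_pos hK 3) hξa)),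
        mul_pos hb (mul_pos (pow_pos hK 3) hξa)]
    calc volume {p : ℝ × ℝ | |p.1 - p.2 ^ 5| ≤ (2:ℝ) ^ k₁ ∧
          |(τ - p.1) - (ξ - p.2) ^ 5| ≤ (2:ℝ) ^ k₂ ∧ p.2 ∈ B}
        ≤ ENNReal.ofReal (2 * 2 ^ m) *
          volume {t | t ∈ B ∧ |τ - Gfun ξ t| ≤ (2:ℝ)^k₁ + 2^k₂} := step1
      _ ≤ ENNReal.ofReal (2 * 2 ^ m) * ENNReal.ofReal (8 * L / M) := mul_le_mul_right hS' _
      _ = ENNReal.ofReal (2 * 2 ^ m * (8 * L / M)) := by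
          rw [← ENNReal.ofReal_mul (by positivity)]
      _ ≤ ENNReal.ofReal (100 * K ^ (-(3:ℝ)) * 2 ^ (k₁ + k₂) * |ξ|⁻¹) :=
          ENNReal.ofReal_le_ofReal hineq
  · -- Part 2
    set K₀ : ℝ := |ξ| ^ (-(3:ℝ)/2) with hK₀def
    have hK₀ : (0:ℝ) < K₀ := Real.rpow_pos_of_pos hξa _
    set R : ℝ := |ξ| ^ ((3:ℝ)/2) with hRdef
    have hR : (0:ℝ) < R := Real.rpow_pos_of_pos hξa _
    have hA3 : |ξ| ^ (3:ℕ) * K₀ = R := by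
      rw [hK₀def, hRdef, ← Real.rpow_natCast |ξ| 3, ← Real.rpow_add hξa]
      norm_num
    have hKR : K₀ * R = 1 := by
      rw [hK₀def, hRdef, ← Real.rpow_add hξa]
      norm_num
    have hK₀R : K₀ = R⁻¹ := by
      have hR0 : R ≠ 0 := ne_of_gt hR
      field_simp
      linarith [hKR]
    set M : ℝ := (5/2) * (|ξ| ^ (3:ℕ) * K₀) with hMdef
    have hM : (0:ℝ) < M := by positivity
    have step1 := fubini_bound τ ξ k₁ k₂ univ MeasurableSet.univ
    have hset : {p : ℝ × ℝ | |p.1 - p.2 ^ 5| ≤ (2:ℝ) ^ k₁ ∧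
        |(τ - p.1) - (ξ - p.2) ^ 5| ≤ (2:ℝ) ^ k₂} =
        {p : ℝ × ℝ | |p.1 - p.2 ^ 5| ≤ (2:ℝ) ^ k₁ ∧
        |(τ - p.1) - (ξ - p.2) ^ 5| ≤ (2:ℝ) ^ k₂ ∧ p.2 ∈ (univ : Set ℝ)} := by
      ext p; simp
    rw [hset]
    have hP₁ : volume {t | t ∈ Ici ((ξ + K₀)/2) ∧ |τ - Gfun ξ t| ≤ L}
        ≤ ENNReal.ofReal (4 * L / M) := by
      apply piece τ ξ L M hM _ (convex_Ici _)
      rcases hξ.lt_or_gt with hneg | hpos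
      · right
        intro t ht
        rw [Gd_eq, hMdef, abs_of_neg hneg]
        have hu : K₀ ≤ 2 * t - ξ := by have := mem_Ici.mp ht; linarith
        nlinarith [bnd2 (-ξ) (2*t-ξ) K₀ hK₀ (by linarith) hu]
      · left
        intro t ht
        rw [Gd_eq, hMdef, abs_of_pos hpos]
        have hu : K₀ ≤ 2 * t - ξ := by have := mem_Ici.mp ht; linarith
        nlinarith [bnd2 ξ (2*t-ξ) K₀ hK₀ hpos hu]
    have hP₂ : volume {t | t ∈ Iic ((ξ - K₀)/2) ∧ |τ - Gfun ξ t| ≤ L}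
        ≤ ENNReal.ofReal (4 * L / M) := by
      apply piece τ ξ L M hM _ (convex_Iic _)
      rcases hξ.lt_or_gt with hneg | hpos
      · left
        intro t ht
        rw [Gd_eq, hMdef, abs_of_neg hneg]
        have hu : 2 * t - ξ ≤ -K₀ := by have := mem_Iic.mp ht; linarith
        nlinarith [bnd2 (-ξ) (-(2*t-ξ)) K₀ hK₀ (by linarith) (by linarith)]
      · right
        intro t ht
        rw [Gd_eq, hMdef, abs_of_pos hpos]
        have hu : 2 * t - ξ ≤ -K₀ := by have := mem_Iic.mp ht; linarith
        nlinarith [bnd2 ξ (-(2*t-ξ)) K₀ hK₀ hpos (by linarith)]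
    have hcover : {t | t ∈ (univ : Set ℝ) ∧ |τ - Gfun ξ t| ≤ (2:ℝ)^k₁ + 2^k₂} ⊆
        ({t | t ∈ Ici ((ξ + K₀)/2) ∧ |τ - Gfun ξ t| ≤ L} ∪
        {t | t ∈ Iic ((ξ - K₀)/2) ∧ |τ - Gfun ξ t| ≤ L}) ∪
        Icc ((ξ - K₀)/2) ((ξ + K₀)/2) := by
      intro t ht
      rcases le_total t ((ξ - K₀)/2) with h | h
      · left; right; exact ⟨mem_Iic.mpr h, ht.2⟩
      rcases le_total ((ξ + K₀)/2) t with h' | h'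
      · left; left; exact ⟨mem_Ici.mpr h', ht.2⟩
      · right; exact ⟨h, h'⟩
    have hS' : volume {t | t ∈ (univ : Set ℝ) ∧ |τ - Gfun ξ t| ≤ (2:ℝ)^k₁ + 2^k₂}
        ≤ ENNReal.ofReal (8 * L / M + K₀) := by
      calc volume {t | t ∈ (univ : Set ℝ) ∧ |τ - Gfun ξ t| ≤ (2:ℝ)^k₁ + 2^k₂}
          ≤ volume (({t | t ∈ Ici ((ξ + K₀)/2) ∧ |τ - Gfun ξ t| ≤ L} ∪
            {t | t ∈ Iic ((ξ - K₀)/2) ∧ |τ - Gfun ξ t| ≤ L}) ∪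
            Icc ((ξ - K₀)/2) ((ξ + K₀)/2)) := measure_mono hcover
        _ ≤ _ + _ := measure_union_le _ _
        _ ≤ (ENNReal.ofReal (4 * L / M) + ENNReal.ofReal (4 * L / M)) +
            ENNReal.ofReal K₀ := by
            refine add_le_add (le_trans (measure_union_le _ _) (add_le_add hP₁ hP₂)) ?_
            rw [Real.volume_Icc]
            apply ENNReal.ofReal_le_ofReal; linarith
        _ = ENNReal.ofReal (8 * L / M + K₀) := by
            rw [← ENNReal.ofReal_add (by positivity) (by positivity),
              ← ENNReal.ofReal_add (by positivity) hK₀.le]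
            ring_nf
    have hineq : 2 * (2:ℝ)^m * (8 * L / M + K₀) ≤ 100 * 2^(k₁+k₂) * K₀ := by
      have hMR : M = (5/2) * R := by rw [hMdef, hA3]
      have h8 : 8 * L / M = (16/5) * L * K₀ := by
        rw [hMR, hK₀R]; field_simp; ring
      rw [h8]
      nlinarith [mul_le_mul_of_nonneg_right hfact hK₀.le,
        mul_le_mul_of_nonneg_right hab hK₀.le, mul_pos hb hK₀]
    calc volume {p : ℝ × ℝ | |p.1 - p.2 ^ 5| ≤ (2:ℝ) ^ k₁ ∧
          |(τ - p.1) - (ξ - p.2) ^ 5| ≤ (2:ℝ) ^ k₂ ∧ p.2 ∈ (univ : Set ℝ)}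
        ≤ ENNReal.ofReal (2 * 2 ^ m) *
          volume {t | t ∈ (univ : Set ℝ) ∧ |τ - Gfun ξ t| ≤ (2:ℝ)^k₁ + 2^k₂} := step1
      _ ≤ ENNReal.ofReal (2 * 2 ^ m) * ENNReal.ofReal (8 * L / M + K₀) :=
          mul_le_mul_right hS' _
      _ = ENNReal.ofReal (2 * 2 ^ m * (8 * L / M + K₀)) := by
          rw [← ENNReal.ofReal_mul (by positivity)]
      _ ≤ ENNReal.ofReal (100 * 2 ^ (k₁ + k₂) * K₀) := ENNReal.ofReal_le_ofReal hineq
end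

section
/- Let s, a ∈ ℝ with s ≥ a. For φ : ℝ → ℂ with ‖φ‖_{H^{s,a}} < ∞ and λ ≥ 1, define φ_λ(x) = λ^{−2} φ(λ^{−1}x). Then ‖φ_λ‖_{H^{s,a}} ≤ λ^{−3/2−a} ‖φ‖_{H^{s,a}}. -/
open MeasureTheory ENNReal

noncomputable section

/-- Japanese bracket `⟨ξ⟩ = (1 + ξ²)^(1/2)`. -/
def jb (x : ℝ) : ℝ := Real.sqrt (1 + x ^ 2)

/-- the weighted Sobolev norm `H^{s,a}`. -/
def Hnorm (s a : ℝ) (φ : ℝ → ℂ) : ℝ≥0∞ :=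
  eLpNorm (fun ξ => ((jb ξ ^ (s - a) * |ξ| ^ a : ℝ) : ℂ) * VectorFourier.fourierIntegral Real.fourierChar volume (innerₗ ℝ) φ ξ) 2 volume

open FourierTransform

lemma lint_comp_mul_left (G : ℝ → ℝ≥0∞) {l : ℝ} (hl : 0 < l) :
    ∫⁻ ξ, G (l * ξ) = ENNReal.ofReal l⁻¹ * ∫⁻ η, G η := by
  let e : ℝ ≃ᵐ ℝ := (Homeomorph.mulLeft₀ l hl.ne').toMeasurableEquiv
  have hcoe : (⇑e) = fun x : ℝ => l * x := rfl
  have h2 : Measure.map (⇑e) volume = ENNReal.ofReal |l⁻¹| • volume := by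
    rw [hcoe]
    exact Real.map_volume_mul_left hl.ne'
  calc ∫⁻ ξ, G (l * ξ) = ∫⁻ η, G η ∂(Measure.map (⇑e) volume) :=
        (MeasureTheory.lintegral_map_equiv G e).symm
    _ = ENNReal.ofReal |l⁻¹| * ∫⁻ η, G η := by rw [h2, lintegral_smul_measure, smul_eq_mul]
    _ = ENNReal.ofReal l⁻¹ * ∫⁻ η, G η := by
        rw [abs_of_pos (inv_pos.mpr hl)]

lemma four_scale (φ : ℝ → ℂ) {l : ℝ} (hl : 0 < l) (ξ : ℝ) :
    𝓕 (fun x => (l : ℂ) ^ (-2 : ℤ) * φ (l⁻¹ * x)) ξ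
      = (l : ℂ)⁻¹ * 𝓕 φ (l * ξ) := by
  have hlC : (l : ℂ) ≠ 0 := by exact_mod_cast hl.ne'
  rw [Real.fourier_real_eq, Real.fourier_real_eq]
  have key : ∀ x : ℝ, (Real.fourierChar (-(x * ξ)) : Circle) • ((l : ℂ) ^ (-2 : ℤ) * φ (l⁻¹ * x))
      = (fun y : ℝ => (Real.fourierChar (-(y * (l * ξ))) : Circle) • ((l : ℂ) ^ (-2 : ℤ) * φ y))
          (l⁻¹ * x) := by
    intro x
    simp only []
    congr 2
    field_simp
  calc (∫ x : ℝ, (Real.fourierChar (-(x * ξ)) : Circle) • ((l : ℂ) ^ (-2 : ℤ) * φ (l⁻¹ * x)))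
      = ∫ x : ℝ, (fun y : ℝ => (Real.fourierChar (-(y * (l * ξ))) : Circle) •
          ((l : ℂ) ^ (-2 : ℤ) * φ y)) (l⁻¹ * x) := by
        exact integral_congr_ae (Filter.Eventually.of_forall key)
    _ = |l⁻¹⁻¹| • ∫ y : ℝ, (Real.fourierChar (-(y * (l * ξ))) : Circle) •
          ((l : ℂ) ^ (-2 : ℤ) * φ y) :=
        MeasureTheory.Measure.integral_comp_mul_left (fun y : ℝ => (Real.fourierChar (-(y * (l * ξ))) : Circle) • ((l : ℂ) ^ (-2 : ℤ) * φ y)) l⁻¹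
    _ = (l : ℂ)⁻¹ * ∫ y : ℝ, (Real.fourierChar (-(y * (l * ξ))) : Circle) • φ y := by
        simp only [Circle.smul_def, smul_eq_mul]
        rw [inv_inv, abs_of_pos hl]
        simp_rw [mul_left_comm _ ((l : ℂ) ^ (-2 : ℤ)), MeasureTheory.integral_const_mul]
        rw [Complex.real_smul]
        rw [← mul_assoc]
        congr 1
        rw [zpow_neg]
        field_simp
    _ = (l : ℂ)⁻¹ * ∫ x : ℝ, (Real.fourierChar (-(x * (l * ξ))) : Circle) • φ x := rfl

theorem stmt16 (s a : ℝ) (hsa : a ≤ s) (φ : ℝ → ℂ) (hφ : Hnorm s a φ ≠ ∞)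
    (l : ℝ) (hl : 1 ≤ l) :
    Hnorm s a (fun x => l ^ (-2 : ℤ) * φ (l⁻¹ * x))
      ≤ ENNReal.ofReal (l ^ (-3/2 - a)) * Hnorm s a φ := by
  have hl0 : (0 : ℝ) < l := lt_of_lt_of_le one_pos hl
  set g : ℝ → ℂ := fun η => ((jb η ^ (s - a) * |η| ^ a : ℝ) : ℂ) * 𝓕 φ η
    with hg
  -- pointwise bound
  have hpt : ∀ ξ : ℝ, ‖((jb ξ ^ (s - a) * |ξ| ^ a : ℝ) : ℂ) *
      𝓕 (fun x => (l : ℂ) ^ (-2 : ℤ) * φ (l⁻¹ * x)) ξ‖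
      ≤ ‖(l ^ (-1 - a) : ℝ) • g (l * ξ)‖ := by
    intro ξ
    rw [four_scale φ hl0 ξ]
    have hjb_pos : ∀ x : ℝ, 0 < jb x := fun x =>
      Real.sqrt_pos.mpr (by positivity)
    have hw1 : (0 : ℝ) ≤ jb ξ ^ (s - a) * |ξ| ^ a :=
      mul_nonneg (Real.rpow_nonneg (hjb_pos ξ).le _) (Real.rpow_nonneg (abs_nonneg ξ) _)
    have hw2 : (0 : ℝ) ≤ jb (l * ξ) ^ (s - a) * |l * ξ| ^ a :=
      mul_nonneg (Real.rpow_nonneg (hjb_pos _).le _) (Real.rpow_nonneg (abs_nonneg _) _)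
    rw [norm_smul, hg]
    simp only [norm_mul, Complex.norm_real, Real.norm_eq_abs, norm_inv]
    rw [abs_of_nonneg (Real.rpow_nonneg (hjb_pos ξ).le _),
      abs_of_nonneg (Real.rpow_nonneg (abs_nonneg ξ) _),
      abs_of_nonneg (Real.rpow_nonneg (hjb_pos (l * ξ)).le _),
      abs_of_nonneg (Real.rpow_nonneg (abs_nonneg (l * ξ)) _),
      abs_of_pos (Real.rpow_pos_of_pos hl0 _), abs_of_pos hl0]
    have key : jb ξ ^ (s - a) * |ξ| ^ a * l⁻¹
        ≤ l ^ (-1 - a : ℝ) * (jb (l * ξ) ^ (s - a) * |l * ξ| ^ a) := ?_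
    · calc jb ξ ^ (s - a) * |ξ| ^ a * (l⁻¹ * ‖𝓕 φ (l * ξ)‖)
          = jb ξ ^ (s - a) * |ξ| ^ a * l⁻¹ * ‖𝓕 φ (l * ξ)‖ := by ring
        _ ≤ l ^ (-1 - a : ℝ) * (jb (l * ξ) ^ (s - a) * |l * ξ| ^ a) *
            ‖𝓕 φ (l * ξ)‖ :=
            mul_le_mul_of_nonneg_right key (norm_nonneg _)
        _ = l ^ (-1 - a : ℝ) * (jb (l * ξ) ^ (s - a) * |l * ξ| ^ a *
            ‖𝓕 φ (l * ξ)‖) := by ring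
    -- need : jb ξ ^ (s-a) * |ξ|^a * l⁻¹ ≤ l^(-1-a) * (jb (lξ)^(s-a) * |lξ|^a)
    have habs : |l * ξ| ^ a = l ^ a * |ξ| ^ a := by
      rw [abs_mul, abs_of_pos hl0, Real.mul_rpow hl0.le (abs_nonneg ξ)]
    have hjb_le : jb ξ ^ (s - a) ≤ jb (l * ξ) ^ (s - a) := by
      apply Real.rpow_le_rpow (hjb_pos ξ).le _ (by linarith)
      apply Real.sqrt_le_sqrt
      have : ξ ^ 2 ≤ (l * ξ) ^ 2 := by
        rw [mul_pow]
        have h1 : (1 : ℝ) ≤ l ^ 2 := by nlinarith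
        exact le_mul_of_one_le_left (sq_nonneg ξ) h1
      linarith
    rw [habs]
    have hrw : l ^ (-1 - a : ℝ) * (jb (l * ξ) ^ (s - a) * (l ^ a * |ξ| ^ a))
        = l ^ (-1 : ℝ) * (jb (l * ξ) ^ (s - a) * |ξ| ^ a) := by
      rw [show l ^ (-1 - a : ℝ) = l ^ (-1 : ℝ) * (l ^ a)⁻¹ by
        rw [← Real.rpow_neg hl0.le a, ← Real.rpow_add hl0]; ring_nf]
      field_simp
    rw [hrw, Real.rpow_neg_one]
    calc jb ξ ^ (s - a) * |ξ| ^ a * l⁻¹ ≤ jb (l * ξ) ^ (s - a) * |ξ| ^ a * l⁻¹ := by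
          apply mul_le_mul_of_nonneg_right (mul_le_mul_of_nonneg_right hjb_le (by positivity))
            (by positivity)
      _ = l⁻¹ * (jb (l * ξ) ^ (s - a) * |ξ| ^ a) := by ring
  -- eLpNorm of composition with scaling
  have hcomp : eLpNorm (fun ξ => g (l * ξ)) 2 volume
      = ENNReal.ofReal l⁻¹ ^ ((1 : ℝ) / 2) * eLpNorm g 2 volume := by
    rw [eLpNorm_eq_lintegral_rpow_enorm_toReal two_ne_zero ENNReal.ofNat_ne_top,
      eLpNorm_eq_lintegral_rpow_enorm_toReal two_ne_zero ENNReal.ofNat_ne_top]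
    rw [show (∫⁻ ξ, ‖g (l * ξ)‖ₑ ^ (2 : ℝ≥0∞).toReal)
        = ENNReal.ofReal l⁻¹ * ∫⁻ η, ‖g η‖ₑ ^ (2 : ℝ≥0∞).toReal from
      lint_comp_mul_left (fun η => ‖g η‖ₑ ^ (2 : ℝ≥0∞).toReal) hl0]
    rw [ENNReal.mul_rpow_of_nonneg _ _ (by norm_num)]
    norm_num
  -- put it together
  unfold Hnorm
  calc eLpNorm (fun ξ => ((jb ξ ^ (s - a) * |ξ| ^ a : ℝ) : ℂ) *
        𝓕 (fun x => (l : ℂ) ^ (-2 : ℤ) * φ (l⁻¹ * x)) ξ) 2 volume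
      ≤ eLpNorm (fun ξ => (l ^ (-1 - a) : ℝ) • g (l * ξ)) 2 volume := eLpNorm_mono hpt
    _ = ‖(l ^ (-1 - a) : ℝ)‖ₑ * eLpNorm (fun ξ => g (l * ξ)) 2 volume :=
        eLpNorm_const_smul (l ^ (-1 - a) : ℝ) (fun ξ => g (l * ξ)) _ _
    _ = ENNReal.ofReal (l ^ (-3/2 - a)) * eLpNorm g 2 volume := by
        rw [hcomp, ← mul_assoc]
        congr 1
        rw [Real.enorm_eq_ofReal (Real.rpow_pos_of_pos hl0 _).le,
          ENNReal.ofReal_rpow_of_pos (inv_pos.mpr hl0), ← ENNReal.ofReal_mul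
            (Real.rpow_pos_of_pos hl0 _).le]
        congr 1
        rw [Real.inv_rpow hl0.le, ← Real.rpow_neg hl0.le, ← Real.rpow_add hl0]
        congr 1
        ring
    _ = ENNReal.ofReal (l ^ (-3/2 - a)) * Hnorm s a φ := rfl
end
end
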